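/- If f and g are balanced flows and their product fg is defined, then fg is balanced and its height is at most max(h(f), h(g)). -/

import Mathlib

/-- First-order terms over natural-number symbols: variables and applications. -/
inductive Tm : Type
  | var : ℕ → Tm
  | app : ℕ → List Tm → Tm

namespace Tm

/-- Apply a substitution (map from variables to terms) homomorphically. -/
def subst (σ : ℕ → Tm) : Tm → Tm
  | var x => σ x
  | app f ts => app f (ts.attach.map fun ⟨t, _⟩ => subst σ t)

/-- List of variables occurring in a term. -/
def varsL : Tm → List ℕ
  | var x => [x]
  | app _ ts => ts.attach.flatMap fun ⟨t, _⟩ => varsL t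

/-- Height of a term: maximal distance from the root to a subterm. -/
def height : Tm → ℕ
  | var _ => 0
  | app _ ts => (ts.attach.map fun ⟨t, _⟩ => height t + 1).foldr max 0

/-- Heights of the occurrences of the variable `x` in a term. -/
def occs (x : ℕ) : Tm → List ℕ
  | var y => if y = x then [0] else []
  | app _ ts => ts.attach.flatMap fun ⟨t, _⟩ => (occs x t).map (· + 1)

/-- Symbols occurring in a term, together with the arity they are used with. -/
def symar : Tm → List (ℕ × ℕ)
  | var _ => []
  | app f ts => (f, ts.length) :: ts.attach.flatMap fun ⟨t, _⟩ => symar t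

end Tm

open Tm

/-- Set of variables of a term. -/
def tvars (t : Tm) : Set ℕ := {x | x ∈ t.varsL}

/-- A term is closed when it has no variables. -/
def Closed (t : Tm) : Prop := t.varsL = []

/-- A substitution is finitary when it is the identity on all but finitely many variables. -/
def Finitary (σ : ℕ → Tm) : Prop := {x | σ x ≠ .var x}.Finite

/-- `σ` unifies `t` and `u`. -/
def Unifies (σ : ℕ → Tm) (t u : Tm) : Prop := subst σ t = subst σ u

/-- `θ` is a most general unifier of `t` and `u`: a (finitary) unifier such that
any other finitary unifier factors as an instance of it. -/
def IsMGU (θ : ℕ → Tm) (t u : Tm) : Prop :=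
  Finitary θ ∧ Unifies θ t u ∧
    ∀ σ, Finitary σ → Unifies σ t u → ∃ ρ, Finitary ρ ∧ ∀ x, σ x = subst ρ (θ x)

/-- Renaming of a term along a bijection of variables. -/
def rename (π : ℕ ≃ ℕ) (t : Tm) : Tm := subst (fun x => .var (π x)) t

/-- A flow is (the data of) a pair of terms `head ⊸ body`. -/
abbrev UFlow := Tm × Tm

/-- The flow condition: the variables of the head occur in the body. -/
def IsFlow (f : UFlow) : Prop := tvars f.1 ⊆ tvars f.2

/-- Equality of flows up to (simultaneous, bijective) renaming of variables. -/
def FlowEquiv (f g : UFlow) : Prop :=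
  ∃ π : ℕ ≃ ℕ, rename π f.1 = g.1 ∧ rename π f.2 = g.2

/-- Variables of a flow. -/
def flowVars (f : UFlow) : Set ℕ := tvars f.1 ∪ tvars f.2

/-- `h` is a product of the flows `f = u ⊸ v` and `g = t ⊸ w`: choosing representatives
with disjoint variables, `h = uθ ⊸ wθ` for `θ` a most general unifier of `v` and `t`. -/
def IsProd (f g h : UFlow) : Prop :=
  ∃ f' g' θ, FlowEquiv f f' ∧ FlowEquiv g g' ∧ flowVars f' ∩ flowVars g' = ∅ ∧
    IsMGU θ f'.2 g'.1 ∧ h = (subst θ f'.1, subst θ g'.2)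

/-- A wiring: a set of flows (finite sets of flows are considered up to renaming,
so we model them as sets of representatives). -/
abbrev Wiring := Set UFlow

/-- Product of wirings: pointwise product of flows, where defined. -/
def wmul (F G : Wiring) : Wiring := {h | ∃ f ∈ F, ∃ g ∈ G, IsProd f g h}

/-- The unit wiring `I = x ⊸ x`. -/
def wI : Wiring := {f | FlowEquiv (.var 0, .var 0) f}

/-- Powers of a wiring. -/
def wpow (F : Wiring) : ℕ → Wiring
  | 0 => wI
  | n + 1 => wmul F (wpow F n)

/-- Equality of wirings up to renaming of each flow. -/
def WEq (F G : Wiring) : Prop :=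
  (∀ f ∈ F, ∃ g ∈ G, FlowEquiv f g) ∧ ∀ g ∈ G, ∃ f ∈ F, FlowEquiv f g

/-- A fact: a flow of the form `t ⊸ t` with `t` closed. -/
def IsFact (f : UFlow) : Prop := Closed f.1 ∧ f.2 = f.1

/-- Application of a wiring to (the fact associated with) a closed term:
the set of product flows. -/
def appF (F : Wiring) (t : Tm) : Set UFlow := {h | ∃ f ∈ F, IsProd f (t, t) h}

/-- Application of a wiring to a fact, keeping the facts produced. -/
def factApp (F : Wiring) (t : Tm) : Set Tm := {v | ∃ f ∈ F, IsProd f (t, t) (v, v)}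

/-- A wiring is deterministic if it produces at most one fact from any fact. -/
def Deterministic (F : Wiring) : Prop := ∀ t, Closed t → (appF F t).Subsingleton

/-- Two terms are matchable if renamings of them with disjoint variables are unifiable. -/
def Matchable (t u : Tm) : Prop :=
  ∃ (π π' : ℕ ≃ ℕ), tvars (rename π t) ∩ tvars (rename π' u) = ∅ ∧
    ∃ θ, Finitary θ ∧ Unifies θ (rename π t) (rename π' u)

/-- A flow is balanced if each variable has all its occurrences at the same height. -/
def BalancedF (f : UFlow) : Prop :=
  ∀ x, ∀ n ∈ occs x f.1 ++ occs x f.2, ∀ m ∈ occs x f.1 ++ occs x f.2, n = m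

/-- Height of a flow. -/
def heightF (f : UFlow) : ℕ := max f.1.height f.2.height

/-- A wiring is balanced if all its flows are. -/
def BalancedW (F : Wiring) : Prop := ∀ f ∈ F, BalancedF f

/-- Height of a wiring: maximal height of its flows. -/
noncomputable def heightW (F : Wiring) : ℕ := sSup (heightF '' F)

/-- The computation space of a wiring `F`: closed terms (identified with the
corresponding facts) of height at most `heightW F` built using only symbols
(with their arities) occurring in `F` and the constant `⋆` (symbol `0`). -/
noncomputable def compSpace (F : Wiring) : Set Tm :=
  {t | Closed t ∧ t.height ≤ heightW F ∧
    ∀ q ∈ t.symar, q = (0, 0) ∨ ∃ f ∈ F, q ∈ f.1.symar ++ f.2.symar}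

/-- Nilpotency of a wiring: some power is the empty wiring. -/
def Nilpotent (F : Wiring) : Prop := ∃ n, 0 < n ∧ wpow F n = ∅

/-- Edges of the computation graph of `F`: from `u` to `v` iff `v ∈ F u`. -/
noncomputable def Edge (F : Wiring) (u v : Tm) : Prop :=
  u ∈ compSpace F ∧ v ∈ compSpace F ∧ v ∈ factApp F u

/-- Acyclicity of the computation graph of `F`. -/
noncomputable def AcyclicCG (F : Wiring) : Prop :=
  ¬ ∃ n, 0 < n ∧ ∃ c : ℕ → Tm, (∀ i < n, Edge F (c i) (c (i + 1))) ∧ c n = c 0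

namespace Tm

theorem my_ind {P : Tm → Prop} (hv : ∀ x, P (var x))
    (ha : ∀ f ts, (∀ t ∈ ts, P t) → P (app f ts)) : ∀ t, P t
  | var x => hv x
  | app f ts => ha f ts fun t ht =>
      have : sizeOf t < sizeOf (app f ts) := by
        have := List.sizeOf_lt_of_mem ht
        simp; omega
      my_ind hv ha t

theorem subst_app (σ : ℕ → Tm) (f : ℕ) (ts : List Tm) :
    subst σ (app f ts) = app f (ts.map (subst σ)) := by simp [subst]

theorem varsL_app (f : ℕ) (ts : List Tm) :
    varsL (app f ts) = ts.flatMap varsL := by simp [varsL]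

theorem occs_app (x f : ℕ) (ts : List Tm) :
    occs x (app f ts) = ts.flatMap (fun t => (occs x t).map (· + 1)) := by simp [occs]

theorem height_app (f : ℕ) (ts : List Tm) :
    height (app f ts) = (ts.map (fun t => height t + 1)).foldr max 0 := by simp [height]

theorem subst_var (σ : ℕ → Tm) (x : ℕ) : subst σ (var x) = σ x := by simp [subst]

theorem varsL_var (x : ℕ) : varsL (var x) = [x] := by simp [varsL]

theorem occs_var (x y : ℕ) : occs x (var y) = if y = x then [0] else [] := by simp [occs]

theorem height_var (x : ℕ) : height (var x) = 0 := by simp [height]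

/-- subst agrees on vars -/
theorem subst_congr : ∀ t, ∀ {σ σ' : ℕ → Tm}, (∀ x ∈ varsL t, σ x = σ' x) →
    subst σ t = subst σ' t := by
  refine my_ind ?_ ?_
  · intro x σ σ' h; simpa [subst_var, varsL] using h x (by simp [varsL])
  · intro f ts ih σ σ' h
    simp only [subst_app]
    congr 1
    apply List.map_congr_left
    intro t ht
    exact ih t ht fun x hx => h x (by simp [varsL_app, List.mem_flatMap]; exact ⟨t, ht, hx⟩)

theorem subst_comp (σ τ : ℕ → Tm) : ∀ t,
    subst τ (subst σ t) = subst (fun x => subst τ (σ x)) t := by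
  refine my_ind ?_ ?_
  · intro x; simp [subst_var]
  · intro f ts ih
    simp only [subst_app, List.map_map]
    congr 1
    apply List.map_congr_left
    intro t ht
    exact ih t ht

theorem subst_id : ∀ t, subst var t = t := by
  refine my_ind (fun x => subst_var var x) ?_
  intro f ts ih
  simp only [subst_app]
  congr 1
  conv_rhs => rw [← List.map_id ts]
  exact List.map_congr_left ih

theorem height_le_subst (σ : ℕ → Tm) : ∀ t, height t ≤ height (subst σ t) := by
  refine my_ind ?_ ?_
  · intro x; simp [height]
  · intro f ts ih
    simp only [subst_app, height_app]
    induction ts with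
    | nil => simp
    | cons a l ihl =>
      simp only [List.map_cons, List.foldr_cons]
      exact max_le_max (by have := ih a (by simp); omega)
        (ihl (fun t ht => ih t (by simp [ht])))

theorem mem_occs_subst_ren (r : ℕ → ℕ) (y : ℕ) : ∀ t, ∀ n ∈ occs y t,
    n ∈ occs (r y) (subst (fun z => var (r z)) t) := by
  refine my_ind ?_ ?_
  · intro x n hn
    simp only [occs] at hn
    split at hn
    · next h => subst h; simp only [subst_var, occs_var]; simpa using hn
    · simp at hn
  · intro f ts ih n hn
    simp only [occs_app, List.mem_flatMap, List.mem_map] at hn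
    obtain ⟨t, ht, k, hk, rfl⟩ := hn
    simp only [subst_app, occs_app, List.mem_flatMap]
    refine ⟨subst (fun z => var (r z)) t, List.mem_map_of_mem ht, ?_⟩
    simp only [List.mem_map]
    exact ⟨k, ih t ht k hk, rfl⟩

theorem mem_varsL_subst {σ : ℕ → Tm} {x : ℕ} : ∀ t, x ∈ varsL (subst σ t) →
    ∃ y ∈ varsL t, x ∈ varsL (σ y) := by
  refine my_ind ?_ ?_
  · intro y h; rw [subst_var] at h; exact ⟨y, by simp [varsL_var], h⟩
  · intro f ts ih h
    simp only [subst_app, varsL_app, List.mem_flatMap, List.mem_map] at h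
    obtain ⟨_, ⟨t, ht, rfl⟩, hx⟩ := h
    obtain ⟨y, hy, hxy⟩ := ih t ht hx
    exact ⟨y, by simp [varsL_app, List.mem_flatMap]; exact ⟨t, ht, hy⟩, hxy⟩

theorem list_map_eq_self {α : Type*} {g : α → α} : ∀ {l : List α}, List.map g l = l →
    ∀ a ∈ l, g a = a := by
  intro l
  induction l with
  | nil => simp
  | cons b l ih =>
    intro h a ha
    simp only [List.map_cons, List.cons.injEq] at h
    rcases ha with _ | ha
    · exact h.1
    · exact ih h.2 a (by assumption)

theorem subst_eq_self {τ : ℕ → Tm} : ∀ t, subst τ t = t → ∀ y ∈ varsL t, τ y = var y := by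
  refine my_ind ?_ ?_
  · intro x h y hy
    rw [subst_var] at h
    simp [varsL_var] at hy; subst hy; exact h
  · intro f ts ih h y hy
    simp only [subst_app, app.injEq] at h
    simp only [varsL_app, List.mem_flatMap] at hy
    obtain ⟨t, ht, hy⟩ := hy
    exact ih t ht (list_map_eq_self h.2 t ht) y hy

theorem mem_varsL_of_mem_occs {x : ℕ} : ∀ t, ∀ n, n ∈ occs x t → x ∈ varsL t := by
  refine my_ind ?_ ?_
  · intro y n hn
    simp only [occs] at hn
    split at hn
    · next h => simp [varsL, h]
    · simp at hn
  · intro f ts ih n hn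
    simp only [occs_app, List.mem_flatMap, List.mem_map] at hn
    obtain ⟨t, ht, k, hk, rfl⟩ := hn
    simp only [varsL_app, List.mem_flatMap]
    exact ⟨t, ht, ih t ht k hk⟩

theorem exists_occ_of_mem_varsL {x : ℕ} : ∀ t, x ∈ varsL t → ∃ n, n ∈ occs x t := by
  refine my_ind ?_ ?_
  · intro y hy; simp [varsL_var] at hy; subst hy; exact ⟨0, by simp [occs_var]⟩
  · intro f ts ih hy
    simp only [varsL_app, List.mem_flatMap] at hy
    obtain ⟨t, ht, hy⟩ := hy
    obtain ⟨n, hn⟩ := ih t ht hy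
    exact ⟨n + 1, by simp only [occs_app, List.mem_flatMap, List.mem_map]
                     exact ⟨t, ht, n, hn, rfl⟩⟩

theorem zero_mem_occs {x : ℕ} : ∀ t, 0 ∈ occs x t → t = var x := by
  refine my_ind ?_ ?_
  · intro y hy
    simp only [occs] at hy
    split at hy
    · next h => rw [h]
    · simp at hy
  · intro f ts _ h
    simp only [occs_app, List.mem_flatMap, List.mem_map] at h
    obtain ⟨t, _, k, _, hk⟩ := h
    omega

end Tm

namespace Tm

/-- foldr max basics -/
theorem le_foldr_max {a : ℕ} : ∀ {l : List ℕ}, a ∈ l → a ≤ l.foldr max 0 := by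
  intro l
  induction l with
  | nil => simp
  | cons b l ih =>
    intro h
    rcases List.mem_cons.1 h with rfl | h
    · simp
    · simp only [List.foldr_cons]
      exact le_trans (ih h) (le_max_right _ _)

theorem foldr_max_le {m : ℕ} : ∀ {l : List ℕ}, (∀ a ∈ l, a ≤ m) → l.foldr max 0 ≤ m := by
  intro l
  induction l with
  | nil => simp
  | cons b l ih =>
    intro h
    simp only [List.foldr_cons, max_le_iff]
    exact ⟨h b (by simp), ih fun a ha => h a (by simp [ha])⟩

theorem foldr_max_eq_of_all_eq {k : ℕ} : ∀ {l : List ℕ}, k ∈ l → (∀ a ∈ l, a = k) →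
    l.foldr max 0 = k := by
  intro l hk hall
  refine le_antisymm (foldr_max_le fun a ha => le_of_eq (hall a ha)) (le_foldr_max hk)

/-- children height bound -/
theorem height_child_lt {f : ℕ} {ts : List Tm} {t : Tm} (ht : t ∈ ts) :
    height t + 1 ≤ height (app f ts) := by
  rw [height_app]
  exact le_foldr_max (List.mem_map_of_mem ht)

/-- `t` is balanced w.r.t. level function ℓ, sitting at level `d`. -/
def LB (ℓ : ℕ → ℕ) (d : ℕ) (t : Tm) : Prop := ∀ x k, k ∈ occs x t → ℓ x = d + k

theorem LB_var {ℓ : ℕ → ℕ} {d x : ℕ} : LB ℓ d (var x) ↔ ℓ x = d := by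
  constructor
  · intro h; simpa using h x 0 (by simp [occs_var])
  · intro h y k hk
    simp only [occs_var] at hk
    split at hk
    · next he => simp at hk; subst hk; subst he; simpa using h
    · simp at hk

theorem LB_app {ℓ : ℕ → ℕ} {d f : ℕ} {ts : List Tm} :
    LB ℓ d (app f ts) ↔ ∀ t ∈ ts, LB ℓ (d + 1) t := by
  constructor
  · intro h t ht x k hk
    have : (k + 1) ∈ occs x (app f ts) := by
      simp only [occs_app, List.mem_flatMap, List.mem_map]
      exact ⟨t, ht, k, hk, rfl⟩
    have := h x (k + 1) this
    omega
  · intro h x k hk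
    simp only [occs_app, List.mem_flatMap, List.mem_map] at hk
    obtain ⟨t, ht, k', hk', rfl⟩ := hk
    have := h t ht x k' hk'
    omega

theorem LB_subst {ℓ : ℕ → ℕ} {σ : ℕ → Tm} (hσ : ∀ z, LB ℓ (ℓ z) (σ z)) :
    ∀ t {d}, LB ℓ d t → LB ℓ d (subst σ t) := by
  refine my_ind ?_ ?_
  · intro y d h x k hk
    rw [subst_var] at hk
    have h1 : ℓ y = d := LB_var.1 h
    have := hσ y x k hk
    omega
  · intro f ts ih d h
    rw [subst_app, LB_app]
    intro t' ht'
    simp only [List.mem_map] at ht'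
    obtain ⟨t, ht, rfl⟩ := ht'
    exact ih t ht (LB_app.1 h t ht)

theorem height_subst_le {ℓ : ℕ → ℕ} {σ : ℕ → Tm} {H : ℕ} :
    ∀ t {d}, LB ℓ d t → height t + d ≤ H →
    (∀ z ∈ varsL t, σ z = var z ∨ height (σ z) + ℓ z ≤ H) →
    height (subst σ t) + d ≤ H := by
  refine my_ind ?_ ?_
  · intro y d h hh hσ
    rw [subst_var]
    rcases hσ y (by simp [varsL_var]) with h1 | h1
    · rw [h1, height_var]; simpa [height_var] using hh
    · have := LB_var.1 h; omega
  · intro f ts ih d h hh hσ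
    rw [subst_app, height_app]
    have : ∀ a ∈ (List.map (subst σ) ts).map (fun t => height t + 1), a ≤ H - d := by
      intro a ha
      simp only [List.map_map, List.mem_map, Function.comp] at ha
      obtain ⟨t, ht, rfl⟩ := ha
      have h1 : height (subst σ t) + (d + 1) ≤ H := by
        refine ih t ht (LB_app.1 h t ht) ?_ ?_
        · have := height_child_lt (f := f) ht; omega
        · intro z hz
          exact hσ z (by simp only [varsL_app, List.mem_flatMap]; exact ⟨t, ht, hz⟩)
      omega
    have h2 := foldr_max_le this
    have hd : d ≤ H := by have : (0:ℕ) ≤ height (app f ts) := Nat.zero_le _; omega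
    omega

end Tm

namespace Tm

def tsize : Tm → ℕ
  | var _ => 1
  | app _ ts => 1 + (ts.attach.map fun ⟨t, _⟩ => tsize t).sum

theorem tsize_app (f : ℕ) (ts : List Tm) :
    tsize (app f ts) = 1 + (ts.map tsize).sum := by simp [tsize]

theorem tsize_var (x : ℕ) : tsize (var x) = 1 := by simp [tsize]

theorem tsize_pos : ∀ t, 1 ≤ tsize t := by
  refine my_ind ?_ ?_
  · intro x; simp [tsize_var]
  · intro f ts _; simp [tsize_app]

end Tm

open Tm


abbrev Eqs := List (ℕ × Tm × Tm)

def UnifiesE (σ : ℕ → Tm) (E : Eqs) : Prop := ∀ e ∈ E, subst σ e.2.1 = subst σ e.2.2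

def CondE (ℓ : ℕ → ℕ) (H : ℕ) (E : Eqs) : Prop :=
  ∀ e ∈ E, LB ℓ e.1 e.2.1 ∧ LB ℓ e.1 e.2.2 ∧ height e.2.1 + e.1 ≤ H ∧ height e.2.2 + e.1 ≤ H

def sizeE (E : Eqs) : ℕ := (E.map (fun e => tsize e.2.1 + tsize e.2.2)).sum

def varsE (E : Eqs) : Finset ℕ :=
  E.foldr (fun e s => e.2.1.varsL.toFinset ∪ e.2.2.varsL.toFinset ∪ s) ∅

theorem mem_varsE {z : ℕ} {E : Eqs} :
    z ∈ varsE E ↔ ∃ e ∈ E, z ∈ varsL e.2.1 ∨ z ∈ varsL e.2.2 := by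
  induction E with
  | nil => simp [varsE]
  | cons e E ih =>
    simp only [varsE, List.foldr_cons, Finset.mem_union, List.mem_toFinset] at *
    constructor
    · rintro ((h | h) | h)
      · exact ⟨e, by simp, Or.inl h⟩
      · exact ⟨e, by simp, Or.inr h⟩
      · obtain ⟨e', he', h⟩ := ih.1 h
        exact ⟨e', by simp [he'], h⟩
    · rintro ⟨e', he', h⟩
      rcases List.mem_cons.1 he' with rfl | he'
      · tauto
      · exact Or.inr (ih.2 ⟨e', he', h⟩)

def Good (ℓ : ℕ → ℕ) (H : ℕ) (E : Eqs) (σ : ℕ → Tm) : Prop :=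
  Finitary σ ∧ UnifiesE σ E ∧
  (∀ τ, Finitary τ → UnifiesE τ E → ∃ ρ, Finitary ρ ∧ ∀ x, τ x = subst ρ (σ x)) ∧
  (∀ z, LB ℓ (ℓ z) (σ z)) ∧ (∀ z, σ z = var z ∨ height (σ z) + ℓ z ≤ H)

theorem good_swap {ℓ H d t u E σ} (h : Good ℓ H ((d, u, t) :: E) σ) :
    Good ℓ H ((d, t, u) :: E) σ := by
  obtain ⟨h1, h2, h3, h4, h5⟩ := h
  refine ⟨h1, ?_, ?_, h4, h5⟩
  · intro e he
    rcases List.mem_cons.1 he with rfl | he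
    · exact (h2 (d, u, t) (by simp)).symm
    · exact h2 e (by simp [he])
  · intro τ hτ hτu
    refine h3 τ hτ ?_
    intro e he
    rcases List.mem_cons.1 he with rfl | he
    · exact (hτu (d, t, u) (by simp)).symm
    · exact hτu e (by simp [he])

theorem unifiesE_cons {σ : ℕ → Tm} {e : ℕ × Tm × Tm} {E : Eqs} :
    UnifiesE σ (e :: E) ↔ subst σ e.2.1 = subst σ e.2.2 ∧ UnifiesE σ E := by
  constructor
  · intro h
    exact ⟨h e (by simp), fun e' he' => h e' (by simp [he'])⟩
  · rintro ⟨h1, h2⟩ e' he'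
    rcases List.mem_cons.1 he' with rfl | he'
    · exact h1
    · exact h2 e' he'

open Tm

theorem elim_step (ℓ : ℕ → ℕ) (H K : ℕ)
    (ihK : ∀ k < K, ∀ E : Eqs, (varsE E).card ≤ k → CondE ℓ H E →
      (∃ τ, UnifiesE τ E) → ∃ σ, Good ℓ H E σ)
    (d x : ℕ) (u : Tm) (E : Eqs)
    (hK : (varsE ((d, Tm.var x, u) :: E)).card ≤ K)
    (hne : u ≠ Tm.var x)
    (hC : CondE ℓ H ((d, Tm.var x, u) :: E))
    (hU : ∃ τ, UnifiesE τ ((d, Tm.var x, u) :: E)) :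
    ∃ σ, Good ℓ H ((d, Tm.var x, u) :: E) σ := by
  obtain ⟨c1, c2, c3, c4⟩ := hC (d, Tm.var x, u) (by simp)
  have hld : ℓ x = d := LB_var.1 c1
  have hxu : x ∉ varsL u := by
    intro hx
    obtain ⟨k, hk⟩ := exists_occ_of_mem_varsL u hx
    have hk' := c2 x k hk
    have hk0 : k = 0 := by omega
    exact hne (zero_mem_occs u (hk0 ▸ hk))
  set δ : ℕ → Tm := fun y => if y = x then u else var y with hδdef
  have hδx : δ x = u := by simp [hδdef]
  have hδy : ∀ y, y ≠ x → δ y = var y := fun y hy => by simp [hδdef, hy]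
  have hδu : subst δ u = u := by
    rw [subst_congr u (σ' := var) fun y hy => hδy y (by rintro rfl; exact hxu hy), subst_id]
  have hτδ : ∀ τ : ℕ → Tm, τ x = subst τ u → ∀ s, subst τ (subst δ s) = subst τ s := by
    intro τ hτ s
    rw [subst_comp]
    refine subst_congr s ?_
    intro y _
    by_cases hy : y = x
    · subst hy; rw [hδx]; exact hτ.symm
    · rw [hδy y hy, subst_var]
  set E' : Eqs := E.map (fun e => (e.1, subst δ e.2.1, subst δ e.2.2)) with hE'
  have key : ∀ (s : Tm) (z : ℕ), z ∈ varsL (subst δ s) → z ≠ x ∧ (z ∈ varsL s ∨ z ∈ varsL u) := by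
    intro s z hzs
    obtain ⟨y, hy, hzy⟩ := mem_varsL_subst s hzs
    by_cases hyx : y = x
    · subst hyx; rw [hδx] at hzy
      exact ⟨fun h => hxu (h ▸ hzy), Or.inr hzy⟩
    · rw [hδy y hyx, varsL_var] at hzy
      simp only [List.mem_singleton] at hzy; subst hzy
      exact ⟨hyx, Or.inl hy⟩
  have hVsub : varsE E' ⊆ (varsE ((d, Tm.var x, u) :: E)).erase x := by
    intro z hz
    obtain ⟨e', he', hzz⟩ := mem_varsE.1 hz
    simp only [hE', List.mem_map] at he'
    obtain ⟨e, he, rfl⟩ := he'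
    have hcases : z ≠ x ∧ (z ∈ varsL e.2.1 ∨ z ∈ varsL e.2.2 ∨ z ∈ varsL u) := by
      rcases hzz with hzz | hzz
      · obtain ⟨h1, h2⟩ := key e.2.1 z hzz; tauto
      · obtain ⟨h1, h2⟩ := key e.2.2 z hzz; tauto
    refine Finset.mem_erase.2 ⟨hcases.1, mem_varsE.2 ?_⟩
    rcases hcases.2 with h | h | h
    · exact ⟨e, by simp [he], Or.inl h⟩
    · exact ⟨e, by simp [he], Or.inr h⟩
    · exact ⟨(d, Tm.var x, u), by simp, Or.inr h⟩
  have hxmem : x ∈ varsE ((d, Tm.var x, u) :: E) :=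
    mem_varsE.2 ⟨(d, Tm.var x, u), by simp, Or.inl (by simp [varsL_var])⟩
  have hcard : (varsE E').card < K :=
    lt_of_lt_of_le (lt_of_le_of_lt (Finset.card_le_card hVsub)
      (Finset.card_erase_lt_of_mem hxmem)) hK
  have hδLB : ∀ z, LB ℓ (ℓ z) (δ z) := by
    intro z
    by_cases hz : z = x
    · subst hz; rw [hδx, hld]; exact c2
    · rw [hδy z hz]; exact LB_var.2 rfl
  have hδH : ∀ z, δ z = var z ∨ height (δ z) + ℓ z ≤ H := by
    intro z
    by_cases hz : z = x
    · subst hz; right; rw [hδx, hld]; exact c4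
    · left; exact hδy z hz
  have hC' : CondE ℓ H E' := by
    intro e' he'
    obtain ⟨e, he, rfl⟩ := List.mem_map.1 he'
    obtain ⟨d1, d2, d3, d4⟩ := hC e (by simp [he])
    exact ⟨LB_subst hδLB e.2.1 d1, LB_subst hδLB e.2.2 d2,
      height_subst_le e.2.1 d1 d3 (fun z _ => hδH z),
      height_subst_le e.2.2 d2 d4 (fun z _ => hδH z)⟩
  have transfer : ∀ τ, UnifiesE τ ((d, Tm.var x, u) :: E) → UnifiesE τ E' := by
    intro τ hτ
    have hhead : τ x = subst τ u := by
      have h0 := (unifiesE_cons.1 hτ).1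
      rwa [subst_var] at h0
    intro e' he'
    obtain ⟨e, he, rfl⟩ := List.mem_map.1 he'
    show subst τ (subst δ e.2.1) = subst τ (subst δ e.2.2)
    rw [hτδ τ hhead, hτδ τ hhead]
    exact (unifiesE_cons.1 hτ).2 e he
  obtain ⟨τ0, hτ0⟩ := hU
  obtain ⟨σ', g1, g2, g3, g4, g5⟩ := ihK _ hcard E' (le_refl _) hC' ⟨τ0, transfer τ0 hτ0⟩
  refine ⟨fun y => subst σ' (δ y), ?_, ?_, ?_, ?_, ?_⟩
  · apply Set.Finite.subset ((Set.finite_singleton x).union g1)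
    intro y hy
    simp only [Set.mem_setOf_eq] at hy
    by_cases hyx : y = x
    · exact Or.inl (by simp [hyx])
    · exact Or.inr (fun hcon => hy (by rw [hδy y hyx, subst_var, hcon]))
  · refine unifiesE_cons.2 ⟨?_, ?_⟩
    · show subst (fun y => subst σ' (δ y)) (var x) = subst (fun y => subst σ' (δ y)) u
      rw [subst_var, ← subst_comp δ σ' u, hδu]
      show subst σ' (δ x) = _
      rw [hδx]
    · intro e he
      show subst (fun y => subst σ' (δ y)) e.2.1 = subst (fun y => subst σ' (δ y)) e.2.2
      rw [← subst_comp δ σ' e.2.1, ← subst_comp δ σ' e.2.2]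
      exact g2 _ (List.mem_map_of_mem he)
  · intro τ hτf hτu
    obtain ⟨ρ, hρf, hρ⟩ := g3 τ hτf (transfer τ hτu)
    refine ⟨ρ, hρf, fun y => ?_⟩
    have hhead : τ x = subst τ u := by
      have h0 := (unifiesE_cons.1 hτu).1
      rwa [subst_var] at h0
    have step1 : τ y = subst τ (δ y) := by
      have h2 := hτδ τ hhead (var y)
      rw [subst_var, subst_var] at h2
      exact h2.symm
    rw [step1, subst_congr (δ y) (σ' := fun z => subst ρ (σ' z)) (fun z _ => hρ z),
      ← subst_comp σ' ρ (δ y)]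
  · intro z
    exact LB_subst g4 (δ z) (hδLB z)
  · intro y
    by_cases hyx : y = x
    · right
      have hh := height_subst_le u c2 c4 (fun z _ => g5 z)
      show height (subst σ' (δ y)) + ℓ y ≤ H
      rw [hyx, hδx, hld]
      exact hh
    · rcases g5 y with h | h
      · left; show subst σ' (δ y) = var y; rw [hδy y hyx, subst_var, h]
      · right; show height (subst σ' (δ y)) + ℓ y ≤ H; rw [hδy y hyx, subst_var]; exact h

theorem map_eq_map_iff_zip {α β : Type*} (g : α → β) :
    ∀ (l l' : List α), l.length = l'.length →
    (l.map g = l'.map g ↔ ∀ p ∈ l.zip l', g p.1 = g p.2) := by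
  intro l
  induction l with
  | nil =>
    intro l' hl
    cases l' with
    | nil => simp
    | cons b l' => simp at hl
  | cons a l ih =>
    intro l' hl
    cases l' with
    | nil => simp at hl
    | cons b l' =>
      simp only [List.length_cons] at hl
      simp only [List.map_cons, List.zip_cons_cons, List.cons.injEq, List.mem_cons]
      rw [ih l' (by omega)]
      constructor
      · rintro ⟨h1, h2⟩ p hp
        rcases hp with rfl | hp
        · exact h1
        · exact h2 p hp
      · intro h
        exact ⟨h (a, b) (Or.inl rfl), fun p hp => h p (Or.inr hp)⟩

theorem zip_sum_le : ∀ (l l' : List Tm),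
    (((l.zip l').map (fun p => tsize p.1 + tsize p.2)).sum) ≤
      (l.map tsize).sum + (l'.map tsize).sum := by
  intro l
  induction l with
  | nil => intro l'; simp
  | cons a l ih =>
    intro l'
    cases l' with
    | nil => simp
    | cons b l' =>
      simp only [List.zip_cons_cons, List.map_cons, List.sum_cons]
      have := ih l'
      omega

theorem sizeE_cons (e : ℕ × Tm × Tm) (E : Eqs) :
    sizeE (e :: E) = tsize e.2.1 + tsize e.2.2 + sizeE E := by
  simp [sizeE]

theorem sizeE_append (E F : Eqs) : sizeE (E ++ F) = sizeE E + sizeE F := by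
  simp [sizeE]

theorem varsE_swap (d : ℕ) (t u : Tm) (E : Eqs) :
    varsE ((d, t, u) :: E) = varsE ((d, u, t) :: E) := by
  ext z
  rw [mem_varsE, mem_varsE]
  constructor <;> rintro ⟨e, he, h⟩ <;> rcases List.mem_cons.1 he with rfl | he
  · exact ⟨(d, u, t), by simp, by simpa using h.symm⟩
  · exact ⟨e, by simp [he], h⟩
  · exact ⟨(d, t, u), by simp, by simpa using h.symm⟩
  · exact ⟨e, by simp [he], h⟩

theorem unify_exists (ℓ : ℕ → ℕ) (H : ℕ) :
    ∀ K S (E : Eqs), (varsE E).card ≤ K → sizeE E ≤ S → CondE ℓ H E →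
    (∃ τ, UnifiesE τ E) → ∃ σ, Good ℓ H E σ := by
  intro K
  induction K using Nat.strong_induction_on with
  | _ K ihK =>
  intro S
  induction S using Nat.strong_induction_on with
  | _ S ihS =>
  intro E hK hS hC hU
  -- reshape ihK for elim_step
  have ihK' : ∀ k < K, ∀ E : Eqs, (varsE E).card ≤ k → CondE ℓ H E →
      (∃ τ, UnifiesE τ E) → ∃ σ, Good ℓ H E σ := by
    intro k hk E' hE' hC' hU'
    exact ihK k hk (sizeE E') E' hE' (le_refl _) hC' hU'
  rcases E with _ | ⟨⟨d, t, u⟩, E⟩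
  · refine ⟨var, ?_, ?_, ?_, ?_, ?_⟩
    · show Set.Finite {x | var x ≠ var x}
      have he : {x : ℕ | var x ≠ var x} = ∅ := by ext x; simp
      rw [he]; exact Set.finite_empty
    · intro e he; simp at he
    · intro τ hτ _
      exact ⟨τ, hτ, fun x => (subst_var τ x).symm⟩
    · intro z; exact LB_var.2 rfl
    · intro z; exact Or.inl rfl
  · -- drop helper
    have hdrop : t = u → ∃ σ, Good ℓ H ((d, t, u) :: E) σ := by
      rintro rfl
      have hsz : sizeE E < S := by
        rw [sizeE_cons] at hS
        have hS' : tsize t + tsize t + sizeE E ≤ S := hS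
        have := tsize_pos t
        omega
      have hcd : (varsE E).card ≤ K := by
        refine le_trans (Finset.card_le_card ?_) hK
        intro z hz
        obtain ⟨e, he, h⟩ := mem_varsE.1 hz
        exact mem_varsE.2 ⟨e, by simp [he], h⟩
      obtain ⟨τ1, hτ1⟩ := hU
      obtain ⟨σ', g1, g2, g3, g4, g5⟩ := ihS (sizeE E) hsz E hcd (le_refl _)
        (fun e he => hC e (by simp [he])) ⟨τ1, (unifiesE_cons.1 hτ1).2⟩
      exact ⟨σ', g1, unifiesE_cons.2 ⟨rfl, g2⟩,
        fun τ hτf hτu => g3 τ hτf (unifiesE_cons.1 hτu).2, g4, g5⟩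
    rcases ht : t with x | ⟨f, ts⟩
    · -- t = var x
      subst ht
      by_cases hux : u = var x
      · exact hdrop (by rw [hux])
      · exact elim_step ℓ H K ihK' d x u E hK hux hC hU
    · subst ht
      rcases hu : u with y | ⟨g, us⟩
      · -- u = var y: swap
        subst hu
        have hswC : CondE ℓ H ((d, Tm.var y, Tm.app f ts) :: E) := by
          intro e he
          rcases List.mem_cons.1 he with rfl | he
          · obtain ⟨d1, d2, d3, d4⟩ := hC (d, Tm.app f ts, Tm.var y) (by simp)
            exact ⟨d2, d1, d4, d3⟩
          · exact hC e (by simp [he])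
        have hswU : ∃ τ, UnifiesE τ ((d, Tm.var y, Tm.app f ts) :: E) := by
          obtain ⟨τ1, hτ1⟩ := hU
          refine ⟨τ1, unifiesE_cons.2 ⟨?_, (unifiesE_cons.1 hτ1).2⟩⟩
          exact ((unifiesE_cons.1 hτ1).1).symm
        have hswK : (varsE ((d, Tm.var y, Tm.app f ts) :: E)).card ≤ K := by
          rw [← varsE_swap]; exact hK
        obtain ⟨σ, hσ⟩ := elim_step ℓ H K ihK' d y (Tm.app f ts) E hswK (by simp) hswC hswU
        exact ⟨σ, good_swap hσ⟩
      · -- app/app: decomposition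
        subst hu
        obtain ⟨τ1, hτ1⟩ := hU
        have hhead := (unifiesE_cons.1 hτ1).1
        simp only [subst_app, Tm.app.injEq] at hhead
        obtain ⟨rfl, hmapeq⟩ := hhead
        have hlen : ts.length = us.length := by
          have := congrArg List.length hmapeq
          simpa using this
        set E' : Eqs := (ts.zip us).map (fun p => (d + 1, p.1, p.2)) ++ E with hE'
        obtain ⟨c1, c2, c3, c4⟩ := hC (d, Tm.app f ts, Tm.app f us) (by simp)
        have c3' : height (Tm.app f ts) + d ≤ H := c3
        have c4' : height (Tm.app f us) + d ≤ H := c4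
        have hiff : ∀ τ : ℕ → Tm,
            UnifiesE τ ((d, Tm.app f ts, Tm.app f us) :: E) ↔ UnifiesE τ E' := by
          intro τ
          rw [unifiesE_cons]
          constructor
          · rintro ⟨h1, h2⟩ e he
            rcases List.mem_append.1 he with he | he
            · obtain ⟨p, hp, rfl⟩ := List.mem_map.1 he
              simp only [subst_app, Tm.app.injEq] at h1
              exact (map_eq_map_iff_zip (subst τ) ts us hlen).1 h1.2 p hp
            · exact h2 e he
          · intro h
            constructor
            · show subst τ (Tm.app f ts) = subst τ (Tm.app f us)
              rw [subst_app, subst_app]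
              congr 1
              refine (map_eq_map_iff_zip (subst τ) ts us hlen).2 ?_
              intro p hp
              exact h (d + 1, p.1, p.2) (List.mem_append.2 (Or.inl (List.mem_map_of_mem hp)))
            · intro e he
              exact h e (List.mem_append.2 (Or.inr he))
        have hsz : sizeE E' < S := by
          rw [sizeE_cons, tsize_app, tsize_app] at hS
          rw [hE', sizeE_append]
          have h1 : sizeE ((ts.zip us).map (fun p => (d + 1, p.1, p.2))) =
              ((ts.zip us).map (fun p => tsize p.1 + tsize p.2)).sum := by
            rw [sizeE, List.map_map]
            rfl
          rw [h1]
          have := zip_sum_le ts us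
          omega
        have hcd : (varsE E').card ≤ K := by
          refine le_trans (Finset.card_le_card ?_) hK
          intro z hz
          obtain ⟨e, he, h⟩ := mem_varsE.1 hz
          rcases List.mem_append.1 he with he | he
          · obtain ⟨p, hp, rfl⟩ := List.mem_map.1 he
            obtain ⟨hp1, hp2⟩ := List.of_mem_zip hp
            refine mem_varsE.2 ⟨(d, Tm.app f ts, Tm.app f us), by simp, ?_⟩
            rcases h with h | h
            · exact Or.inl (by rw [varsL_app]; exact List.mem_flatMap.2 ⟨p.1, hp1, h⟩)
            · exact Or.inr (by rw [varsL_app]; exact List.mem_flatMap.2 ⟨p.2, hp2, h⟩)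
          · exact mem_varsE.2 ⟨e, by simp [he], h⟩
        have hC' : CondE ℓ H E' := by
          intro e he
          rcases List.mem_append.1 he with he | he
          · obtain ⟨p, hp, rfl⟩ := List.mem_map.1 he
            obtain ⟨hp1, hp2⟩ := List.of_mem_zip hp
            refine ⟨LB_app.1 c1 p.1 hp1, LB_app.1 c2 p.2 hp2, ?_, ?_⟩
            · have := height_child_lt (f := f) hp1
              show height p.1 + (d + 1) ≤ H
              omega
            · have := height_child_lt (f := f) hp2
              show height p.2 + (d + 1) ≤ H
              omega
          · exact hC e (by simp [he])
        obtain ⟨σ', g1, g2, g3, g4, g5⟩ := ihS (sizeE E') hsz E' hcd (le_refl _) hC'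
          ⟨τ1, (hiff τ1).1 hτ1⟩
        exact ⟨σ', g1, (hiff σ').2 g2, fun τ hτf hτu => g3 τ hτf ((hiff τ).1 hτu), g4, g5⟩


namespace Tm

theorem rename_eq (π : ℕ ≃ ℕ) (t : Tm) :
    rename π t = subst (fun x => Tm.var (π x)) t := rfl

theorem rename_rename_symm (π : ℕ ≃ ℕ) (t : Tm) : rename π.symm (rename π t) = t := by
  rw [rename_eq, rename_eq, subst_comp]
  have hc : ∀ x ∈ varsL t,
      (fun x => subst (fun z => Tm.var (π.symm z)) (Tm.var (π x))) x = Tm.var x := by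
    intro x _
    show subst (fun z => Tm.var (π.symm z)) (Tm.var (π x)) = Tm.var x
    rw [subst_var]
    simp
  rw [subst_congr t hc, subst_id]

theorem occs_rename_le (π : ℕ ≃ ℕ) (x n : ℕ) (t : Tm)
    (hn : n ∈ occs x (rename π t)) : n ∈ occs (π.symm x) t := by
  have h := mem_occs_subst_ren (fun z => π.symm z) x (rename π t) n hn
  have h2 : subst (fun z => Tm.var (π.symm z)) (rename π t) = t := rename_rename_symm π t
  rwa [h2] at h

theorem height_rename (π : ℕ ≃ ℕ) (t : Tm) : height (rename π t) = height t := by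
  refine le_antisymm ?_ (height_le_subst _ t)
  have := height_le_subst (fun z => Tm.var (π.symm z)) (rename π t)
  rwa [show subst (fun z => Tm.var (π.symm z)) (rename π t) = t from rename_rename_symm π t] at this

end Tm

open Tm in
theorem balancedF_equiv {f f' : UFlow} (h : FlowEquiv f f') (hb : BalancedF f) :
    BalancedF f' := by
  obtain ⟨π, h1, h2⟩ := h
  intro x n hn m hm
  have push : ∀ k, k ∈ occs x f'.1 ++ occs x f'.2 →
      k ∈ occs (π.symm x) f.1 ++ occs (π.symm x) f.2 := by
    intro k hk
    rcases List.mem_append.1 hk with hk | hk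
    · exact List.mem_append.2 (Or.inl (occs_rename_le π x k f.1 (h1 ▸ hk)))
    · exact List.mem_append.2 (Or.inr (occs_rename_le π x k f.2 (h2 ▸ hk)))
  exact hb (π.symm x) n (push n hn) m (push m hm)

open Tm in
theorem heightF_equiv {f f' : UFlow} (h : FlowEquiv f f') : heightF f' = heightF f := by
  obtain ⟨π, h1, h2⟩ := h
  rw [heightF, heightF, ← h1, ← h2, height_rename, height_rename]

/-- the product of balanced flows, when defined, is balanced, of
height at most the maximum of the heights. -/
theorem balanced_prod (f g h : UFlow) (hf : IsFlow f) (hg : IsFlow g)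
    (hbf : BalancedF f) (hbg : BalancedF g) (hp : IsProd f g h) :
    BalancedF h ∧ heightF h ≤ max (heightF f) (heightF g) := by
  obtain ⟨f', g', θ, hff', hgg', hdisj, hmgu, heq⟩ := hp
  subst heq
  set H := max (heightF f) (heightF g) with hH
  have hbf' : BalancedF f' := balancedF_equiv hff' hbf
  have hbg' : BalancedF g' := balancedF_equiv hgg' hbg
  have hHf : heightF f' = heightF f := heightF_equiv hff'
  have hHg : heightF g' = heightF g := heightF_equiv hgg'
  -- combined occurrence lists and the level function
  set L : ℕ → List ℕ := fun x =>
    (occs x f'.1 ++ occs x f'.2) ++ (occs x g'.1 ++ occs x g'.2) with hLdef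
  set ℓ : ℕ → ℕ := fun x => (L x).foldr max 0 with hℓdef
  have hnotboth : ∀ x, ∀ k k', (k ∈ occs x f'.1 ++ occs x f'.2) →
      (k' ∈ occs x g'.1 ++ occs x g'.2) → False := by
    intro x k k' hk hk'
    have hxf : x ∈ flowVars f' := by
      rcases List.mem_append.1 hk with hk | hk
      · exact Or.inl (mem_varsL_of_mem_occs f'.1 k hk)
      · exact Or.inr (mem_varsL_of_mem_occs f'.2 k hk)
    have hxg : x ∈ flowVars g' := by
      rcases List.mem_append.1 hk' with hk' | hk'
      · exact Or.inl (mem_varsL_of_mem_occs g'.1 k' hk')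
      · exact Or.inr (mem_varsL_of_mem_occs g'.2 k' hk')
    have : x ∈ flowVars f' ∩ flowVars g' := ⟨hxf, hxg⟩
    rw [hdisj] at this
    exact this
  have hall : ∀ x, ∀ k ∈ L x, ∀ k' ∈ L x, k = k' := by
    intro x k hk k' hk'
    rcases List.mem_append.1 hk with hk | hk <;>
      rcases List.mem_append.1 hk' with hk' | hk'
    · exact hbf' x k hk k' hk'
    · exact absurd (hnotboth x k k' hk hk') (by simp)
    · exact absurd (hnotboth x k' k hk' hk) (by simp)
    · exact hbg' x k hk k' hk'
  have hlev : ∀ x k, k ∈ L x → ℓ x = k := by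
    intro x k hk
    exact foldr_max_eq_of_all_eq hk (fun a ha => hall x a ha k hk)
  have hLB1 : LB ℓ 0 f'.1 := fun x k hk => by
    simpa using hlev x k (List.mem_append.2 (Or.inl (List.mem_append.2 (Or.inl hk))))
  have hLB2 : LB ℓ 0 f'.2 := fun x k hk => by
    simpa using hlev x k (List.mem_append.2 (Or.inl (List.mem_append.2 (Or.inr hk))))
  have hLB3 : LB ℓ 0 g'.1 := fun x k hk => by
    simpa using hlev x k (List.mem_append.2 (Or.inr (List.mem_append.2 (Or.inl hk))))
  have hLB4 : LB ℓ 0 g'.2 := fun x k hk => by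
    simpa using hlev x k (List.mem_append.2 (Or.inr (List.mem_append.2 (Or.inr hk))))
  have hhf1 : height f'.1 ≤ H := le_trans (le_trans (le_max_left _ _) hHf.le) (le_max_left _ _)
  have hhf2 : height f'.2 ≤ H := le_trans (le_trans (le_max_right _ _) hHf.le) (le_max_left _ _)
  have hhg1 : height g'.1 ≤ H := le_trans (le_trans (le_max_left _ _) hHg.le) (le_max_right _ _)
  have hhg2 : height g'.2 ≤ H := le_trans (le_trans (le_max_right _ _) hHg.le) (le_max_right _ _)
  -- run unification
  set E₀ : Eqs := [(0, f'.2, g'.1)] with hE₀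
  have hC : CondE ℓ H E₀ := by
    intro e he
    simp only [hE₀, List.mem_singleton] at he
    subst he
    exact ⟨hLB2, hLB3, by simpa using hhf2, by simpa using hhg1⟩
  have hUθ : UnifiesE θ E₀ := by
    intro e he
    simp only [hE₀, List.mem_singleton] at he
    subst he
    exact hmgu.2.1
  obtain ⟨σ, g1, g2, g3, g4, g5⟩ :=
    unify_exists ℓ H (varsE E₀).card (sizeE E₀) E₀ (le_refl _) (le_refl _) hC ⟨θ, hUθ⟩
  have hσu : Unifies σ f'.2 g'.1 := g2 (0, f'.2, g'.1) (by simp [hE₀])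
  obtain ⟨ρ, _, hρ⟩ := hmgu.2.2 σ g1 hσu
  obtain ⟨ρ', _, hρ'⟩ := g3 θ hmgu.1 hUθ
  -- on variables of θ-images, ρ is variable-valued
  have hvarval : ∀ x y, y ∈ varsL (θ x) → ∃ z, ρ y = Tm.var z := by
    intro x y hy
    have h1 : subst (fun w => subst ρ' (ρ w)) (θ x) = θ x := by
      rw [← subst_comp, ← hρ x, ← hρ' x]
    have h2 := subst_eq_self (θ x) h1 y hy
    rcases hcase : ρ y with z | ⟨c, l⟩
    · exact ⟨z, rfl⟩
    · rw [hcase, subst_app] at h2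
      exact absurd h2 (by simp)
  set r : ℕ → ℕ := fun y => match ρ y with | Tm.var z => z | Tm.app _ _ => 0 with hrdef
  have hr : ∀ x y, y ∈ varsL (θ x) → ρ y = Tm.var (r y) := by
    intro x y hy
    obtain ⟨z, hz⟩ := hvarval x y hy
    simp [hrdef, hz]
  have hsub : ∀ w : Tm, subst σ w = subst (fun y => Tm.var (r y)) (subst θ w) := by
    intro w
    rw [subst_comp]
    refine subst_congr w ?_
    intro x _
    rw [hρ x]
    refine subst_congr (θ x) ?_
    intro y hy
    exact hr x y hy
  have hb1 : LB ℓ 0 (subst σ f'.1) := LB_subst g4 f'.1 hLB1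
  have hb2 : LB ℓ 0 (subst σ g'.2) := LB_subst g4 g'.2 hLB4
  constructor
  · -- balanced
    intro x n hn m hm
    have push : ∀ k, k ∈ occs x (subst θ f'.1, subst θ g'.2).1 ++
        occs x (subst θ f'.1, subst θ g'.2).2 → ℓ (r x) = k := by
      intro k hk
      rcases List.mem_append.1 hk with hk | hk
      · have h3 := mem_occs_subst_ren r x (subst θ f'.1) k hk
        rw [← hsub f'.1] at h3
        simpa using hb1 (r x) k h3
      · have h3 := mem_occs_subst_ren r x (subst θ g'.2) k hk
        rw [← hsub g'.2] at h3
        simpa using hb2 (r x) k h3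
    rw [← push n hn, ← push m hm]
  · -- height
    have hh1 : height (subst θ f'.1) ≤ H := by
      have ha := height_le_subst (fun y => Tm.var (r y)) (subst θ f'.1)
      rw [← hsub f'.1] at ha
      have hb := height_subst_le f'.1 hLB1 (by simpa using hhf1) (fun z _ => g5 z)
      omega
    have hh2 : height (subst θ g'.2) ≤ H := by
      have ha := height_le_subst (fun y => Tm.var (r y)) (subst θ g'.2)
      rw [← hsub g'.2] at ha
      have hb := height_subst_le g'.2 hLB4 (by simpa using hhg2) (fun z _ => g5 z)
      omega
    simpa [heightF] using max_le hh1 hh2
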